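/- arXiv:1710.08350 — 2 statements merged into one kernel-verified Lean document; each statement's English description precedes it below -/
import Mathlib

section
/- For all polynomials p, q ∈ ℝ[x]: p ∼_Φ q if and only if p − q ∈ Z_Φ. -/
open MvPolynomial

/-- The Lie derivative of a polynomial along the polynomial vector field `F`. -/
noncomputable def lieDeriv {N : ℕ} (F : Fin N → MvPolynomial (Fin N) ℝ)
    (p : MvPolynomial (Fin N) ℝ) : MvPolynomial (Fin N) ℝ :=
  ∑ i, pderiv i p * F i

/-- `R` is an 𝓛-bisimulation for the initial value problem `Φ = (F, v₀)`. -/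
def IsLBisim {N : ℕ} (F : Fin N → MvPolynomial (Fin N) ℝ) (v₀ : Fin N → ℝ)
    (R : MvPolynomial (Fin N) ℝ → MvPolynomial (Fin N) ℝ → Prop) : Prop :=
  ∀ p q, R p q → eval v₀ p = eval v₀ q ∧ R (lieDeriv F p) (lieDeriv F q)

/-- `p ∼_Φ q`: the polynomials are related by some 𝓛-bisimulation. -/
def LBisimilar {N : ℕ} (F : Fin N → MvPolynomial (Fin N) ℝ) (v₀ : Fin N → ℝ)
    (p q : MvPolynomial (Fin N) ℝ) : Prop :=
  ∃ R, IsLBisim F v₀ R ∧ R p q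

/-- `Z_Φ`: the set of polynomials whose induced behaviour vanishes identically on `D`. -/
def Zset {N : ℕ} (x : ℝ → Fin N → ℝ) (D : Set ℝ) : Set (MvPolynomial (Fin N) ℝ) :=
  {p | ∀ t ∈ D, eval (x t) p = 0}

private lemma lieDeriv_sub' {N : ℕ} (F : Fin N → MvPolynomial (Fin N) ℝ)
    (p q : MvPolynomial (Fin N) ℝ) :
    lieDeriv F (p - q) = lieDeriv F p - lieDeriv F q := by
  simp [lieDeriv, sub_mul, Finset.sum_sub_distrib]

private lemma hasDerivAt_eval' {N : ℕ} {F : Fin N → MvPolynomial (Fin N) ℝ}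
    {D : Set ℝ} {x : ℝ → Fin N → ℝ}
    (hsol : ∀ t ∈ D, HasDerivAt x (fun i => eval (x t) (F i)) t)
    (p : MvPolynomial (Fin N) ℝ) {t : ℝ} (ht : t ∈ D) :
    HasDerivAt (fun s => eval (x s) p) (eval (x t) (lieDeriv F p)) t := by
  induction p using MvPolynomial.induction_on with
  | C a => simpa [lieDeriv, pderiv_C] using hasDerivAt_const t (a : ℝ)
  | add p q hp hq =>
      have : lieDeriv F (p + q) = lieDeriv F p + lieDeriv F q := by
        simp [lieDeriv, add_mul, Finset.sum_add_distrib]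
      simpa [this] using hp.fun_add hq
  | mul_X p n hp =>
      have hXn : HasDerivAt (fun s => x s n) (eval (x t) (F n)) t :=
        hasDerivAt_pi.1 (hsol t ht) n
      have hmul := hp.fun_mul hXn
      have hL : lieDeriv F (p * X n) = lieDeriv F p * X n + p * F n := by
        classical
        simp only [lieDeriv, pderiv_mul, pderiv_X, add_mul, Finset.sum_add_distrib]
        congr 1
        · rw [Finset.sum_mul]
          exact Finset.sum_congr rfl fun i _ => by ring
        · simp only [mul_assoc, ← Finset.mul_sum]
          congr 1
          rw [Finset.sum_eq_single n] <;> simp +contextual [Pi.single_apply, eq_comm]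
      simpa [hL] using hmul

private lemma analyticOnNhd_eval' {N : ℕ} {D : Set ℝ} {x : ℝ → Fin N → ℝ}
    (han : ∀ i, AnalyticOnNhd ℝ (fun t => x t i) D)
    (p : MvPolynomial (Fin N) ℝ) :
    AnalyticOnNhd ℝ (fun t => eval (x t) p) D := by
  induction p using MvPolynomial.induction_on with
  | C a => simpa using (analyticOnNhd_const : AnalyticOnNhd ℝ (fun _ : ℝ => (a:ℝ)) D)
  | add p q hp hq => simpa using (show AnalyticOnNhd ℝ (fun t => eval (x t) p + eval (x t) q) D from
      fun z hz => (hp z hz).fun_add (hq z hz))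
  | mul_X p n hp => simpa using hp.mul (han n)

/-- `p ∼_Φ q` iff `p − q ∈ Z_Φ`. -/
theorem stmt7
    (N : ℕ) (hN : 1 ≤ N)
    (F : Fin N → MvPolynomial (Fin N) ℝ) (v₀ : Fin N → ℝ)
    (D : Set ℝ) (hD : IsOpen D) (hDc : D.OrdConnected) (h0 : (0 : ℝ) ∈ D)
    (x : ℝ → Fin N → ℝ)
    (hsol : ∀ t ∈ D, HasDerivAt x (fun i => eval (x t) (F i)) t)
    (hx0 : x 0 = v₀)
    (han : ∀ i, AnalyticOnNhd ℝ (fun t => x t i) D)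
    (p q : MvPolynomial (Fin N) ℝ) :
    LBisimilar F v₀ p q ↔ p - q ∈ Zset x D := by
  constructor
  · rintro ⟨R, hR, hpq⟩
    set r := p - q with hr
    set g : ℝ → ℝ := fun t => eval (x t) r with hg
    -- iterates are related
    have hiter : ∀ n, R ((lieDeriv F)^[n] p) ((lieDeriv F)^[n] q) := by
      intro n
      induction n with
      | zero => exact hpq
      | succ n ih =>
          rw [Function.iterate_succ_apply', Function.iterate_succ_apply']
          exact (hR _ _ ih).2
    have hiter_sub : ∀ n, (lieDeriv F)^[n] r = (lieDeriv F)^[n] p - (lieDeriv F)^[n] q := by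
      intro n
      induction n with
      | zero => rfl
      | succ n ih =>
          rw [Function.iterate_succ_apply', Function.iterate_succ_apply',
            Function.iterate_succ_apply', ih, lieDeriv_sub']
    have hval0 : ∀ n, eval v₀ ((lieDeriv F)^[n] r) = 0 := by
      intro n
      rw [hiter_sub n, map_sub, (hR _ _ (hiter n)).1, sub_self]
    -- iterated derivatives of g agree with evaluations of Lie iterates on D
    have key : ∀ n, Set.EqOn (iteratedDeriv n g)
        (fun t => eval (x t) ((lieDeriv F)^[n] r)) D := by
      intro n
      induction n with
      | zero => intro t _; simp [g]
      | succ n ih =>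
          intro t ht
          have hev : iteratedDeriv n g =ᶠ[nhds t]
              (fun s => eval (x s) ((lieDeriv F)^[n] r)) :=
            Filter.eventuallyEq_of_mem (hD.mem_nhds ht) ih
          rw [iteratedDeriv_succ]
          calc deriv (iteratedDeriv n g) t
              = deriv (fun s => eval (x s) ((lieDeriv F)^[n] r)) t := hev.deriv_eq
            _ = eval (x t) (lieDeriv F ((lieDeriv F)^[n] r)) :=
                (hasDerivAt_eval' hsol _ ht).deriv
            _ = eval (x t) ((lieDeriv F)^[n+1] r) := by
                rw [Function.iterate_succ_apply']
    have hder0 : ∀ n, iteratedDeriv n g 0 = 0 := by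
      intro n
      rw [key n h0]
      simpa [hx0] using hval0 n
    -- g is eventually zero near 0
    have hanal : AnalyticOnNhd ℝ g D := analyticOnNhd_eval' han r
    obtain ⟨ps, hps⟩ := hanal 0 h0
    obtain ⟨rad, hball⟩ := hps
    have hev0 : g =ᶠ[nhds 0] 0 := by
      have hmem : EMetric.ball (0 : ℝ) rad ∈ nhds (0 : ℝ) :=
        EMetric.ball_mem_nhds 0 hball.r_pos
      refine Filter.eventuallyEq_of_mem hmem fun y hy => ?_
      have hsum := hball.hasSum_iteratedFDeriv hy
      have hzero : ∀ n : ℕ, ((n.factorial : ℝ))⁻¹ • iteratedFDeriv ℝ n g 0 (fun _ => y) = 0 := by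
        intro n
        rw [iteratedFDeriv_apply_eq_iteratedDeriv_mul_prod, hder0 n]
        simp
      have := (hsum.congr_fun fun n => (hzero n).symm).unique hasSum_zero
      simpa using this
    -- identity theorem
    intro t ht
    exact hanal.eqOn_zero_of_preconnected_of_eventuallyEq_zero
      hDc.isPreconnected h0 hev0 ht
  · intro hz
    refine ⟨fun a b => ∀ t ∈ D, eval (x t) (a - b) = 0, ?_, hz⟩
    intro a b hab
    constructor
    · have := hab 0 h0
      rw [hx0, map_sub, sub_eq_zero] at this
      exact this
    · intro t ht
      rw [← lieDeriv_sub']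
      have h1 : HasDerivAt (fun s => eval (x s) (a - b))
          (eval (x t) (lieDeriv F (a - b))) t := hasDerivAt_eval' hsol _ ht
      have h2 : HasDerivAt (fun s => eval (x s) (a - b)) 0 t := by
        refine (hasDerivAt_const t (0 : ℝ)).congr_of_eventuallyEq ?_
        exact Filter.eventuallyEq_of_mem (hD.mem_nhds ht) hab
      exact h1.unique h2
end

section
/- Approximate linearization: let m ≥ 1, let α_1,…,α_M ∈ ℝ[x], let p ∈ ℝ[x], and suppose there exist a vector p̂ ∈ ℝ^M and a real M×M matrix L such that for every 0 ≤ j ≤ m−1 one has 𝓛⁽ʲ⁾(p) = ∑_{k=1}^M (L^j p̂)_k · α_k. Let φ = (α_1(v₀),…,α_M(v₀))^T ∈ ℝ^M, K_m = span{φ, L^Tφ, …, (L^T)^{m−1}φ}, let B be an M×l matrix with orthonormal columns (B^T B = I_l) whose column span equals K_m, set A = B^T L^T B, and let y : ℝ → ℝ^l be the (unique) solution of the linear system y′(t) = A y(t), y(0) = B^T φ. Then for every 0 ≤ j ≤ m−1 the j-th derivative at t = 0 of t ↦ p(x(t)) equals the j-th derivative at t = 0 of t ↦ p̂^T B y(t);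 consequently p(x(t)) − p̂^T B y(t) = O(t^m) as t → 0. -/
open MvPolynomial Matrix Filter Asymptotics
open scoped Topology

section aux

variable {N : ℕ}

lemma contDiff_eval_mv (q : MvPolynomial (Fin N) ℝ) {n : WithTop ℕ∞} :
    ContDiff ℝ n (fun v : Fin N → ℝ => eval v q) := by
  induction q using MvPolynomial.induction_on with
  | C a => simpa using contDiff_const
  | add p q hp hq => simpa using hp.add hq
  | mul_X q i hq => simpa using hq.mul (contDiff_pi.1 contDiff_id i)

lemma lieDeriv_C (F : Fin N → MvPolynomial (Fin N) ℝ) (a : ℝ) :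
    lieDeriv F (C a) = 0 := by
  simp [lieDeriv]

lemma lieDeriv_add (F : Fin N → MvPolynomial (Fin N) ℝ) (p q : MvPolynomial (Fin N) ℝ) :
    lieDeriv F (p + q) = lieDeriv F p + lieDeriv F q := by
  simp [lieDeriv, add_mul, Finset.sum_add_distrib]

lemma lieDeriv_mul_X (F : Fin N → MvPolynomial (Fin N) ℝ) (q : MvPolynomial (Fin N) ℝ)
    (i : Fin N) :
    lieDeriv F (q * X i) = lieDeriv F q * X i + q * F i := by
  classical
  have key : ∀ j : Fin N, pderiv j (q * X i) * F j
      = pderiv j q * F j * X i + (if j = i then q * F j else 0) := by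
    intro j
    rw [pderiv_mul, pderiv_X]
    by_cases h : j = i <;> simp [h, Pi.single_apply] <;> ring
  simp only [lieDeriv, key, Finset.sum_add_distrib, Finset.sum_mul,
    Finset.sum_ite_eq' Finset.univ i (fun j => q * F j), Finset.mem_univ, if_true]

lemma hasDerivAt_eval_comp (F : Fin N → MvPolynomial (Fin N) ℝ)
    {x : ℝ → Fin N → ℝ} {t : ℝ}
    (hx : HasDerivAt x (fun i => eval (x t) (F i)) t)
    (q : MvPolynomial (Fin N) ℝ) :
    HasDerivAt (fun s => eval (x s) q) (eval (x t) (lieDeriv F q)) t := by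
  induction q using MvPolynomial.induction_on with
  | C a => simpa [lieDeriv_C] using hasDerivAt_const t a
  | add p q hp hq => simpa [lieDeriv_add] using hp.fun_add hq
  | mul_X q i hq =>
      have hXi : HasDerivAt (fun s => x s i) (eval (x t) (F i)) t := (hasDerivAt_pi.1 hx) i
      have := hq.fun_mul hXi
      simpa [lieDeriv_mul_X] using this

lemma hasDerivAt_dot {l : ℕ} (c : Fin l → ℝ) {y : ℝ → Fin l → ℝ} {y' : Fin l → ℝ} {t : ℝ}
    (h : HasDerivAt y y' t) : HasDerivAt (fun s => c ⬝ᵥ y s) (c ⬝ᵥ y') t := by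
  simp only [dotProduct]
  exact HasDerivAt.fun_sum fun k _ => ((hasDerivAt_pi.1 h) k).const_mul (c k)

lemma iDW_of_isOpen {f : ℝ → ℝ} {s : Set ℝ} (hs : IsOpen s) {x : ℝ} (hx : x ∈ s) (n : ℕ) :
    iteratedDerivWithin n f s x = iteratedDeriv n f x := by
  rw [iteratedDerivWithin, iteratedDeriv, iteratedFDerivWithin_of_isOpen n hs hx]

lemma abs_le_of_mem_uIcc {u t : ℝ} (hu : u ∈ Set.uIcc 0 t) : |u| ≤ |t| := by
  rcases Set.mem_uIcc.mp hu with ⟨h1, h2⟩ | ⟨h1, h2⟩ <;>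
    refine abs_le.mpr ⟨?_, ?_⟩ <;> [skip; skip; skip; skip] <;>
    nlinarith [le_abs_self t, neg_abs_le t]

lemma isBigO_of_iteratedDerivWithin_zero :
    ∀ (m : ℕ) (f : ℝ → ℝ) (D : Set ℝ), IsOpen D → (0:ℝ) ∈ D →
    ContDiffOn ℝ m f D → (∀ j < m, iteratedDerivWithin j f D 0 = 0) →
    f =O[𝓝 (0:ℝ)] (fun t => t ^ m) := by
  intro m
  induction m with
  | zero =>
      intro f D hD h0 hf _
      have hc : ContinuousAt f 0 := (hf.continuousOn.continuousAt (hD.mem_nhds h0))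
      simpa [Set.mem_setOf_eq] using hc.tendsto.isBigO_one ℝ
  | succ m ih =>
      intro f D hD h0 hf hder
      have hone : (1 : WithTop ℕ∞) ≤ ((m + 1 : ℕ) : WithTop ℕ∞) := by
        exact_mod_cast Nat.one_le_iff_ne_zero.mpr (Nat.succ_ne_zero m)
      have hdiff : ∀ t ∈ D, HasDerivAt f (deriv f t) t := fun t ht =>
        ((hf.differentiableOn (by exact_mod_cast Nat.succ_ne_zero m)).differentiableAt (hD.mem_nhds ht)).hasDerivAt
      have hcast : ((m + 1 : ℕ) : WithTop ℕ∞) = (m : WithTop ℕ∞) + 1 := by push_cast; ring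
      have hf' : ContDiffOn ℝ m (deriv f) D := hf.deriv_of_isOpen hD (le_of_eq hcast.symm)
      have hder' : ∀ j < m, iteratedDerivWithin j (deriv f) D 0 = 0 := by
        intro j hj
        have h1 : iteratedDerivWithin (j+1) f D 0 = 0 := hder (j+1) (Nat.succ_lt_succ hj)
        rw [iteratedDerivWithin_succ'] at h1
        rwa [iteratedDerivWithin_congr
          (fun u hu => derivWithin_of_isOpen hD hu) h0] at h1
      have hO : deriv f =O[𝓝 (0:ℝ)] fun t => t ^ m := ih (deriv f) D hD h0 hf' hder'
      have hf0 : f 0 = 0 := by simpa using hder 0 (Nat.succ_pos m)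
      rw [isBigO_iff] at hO ⊢
      obtain ⟨C, hC⟩ := hO
      refine ⟨max C 0, ?_⟩
      have hDev : ∀ᶠ u in 𝓝 (0:ℝ), u ∈ D := hD.eventually_mem h0
      obtain ⟨δ, hδ, hδ2⟩ := Metric.eventually_nhds_iff.mp (hC.and hDev)
      filter_upwards [Metric.ball_mem_nhds (0:ℝ) hδ] with t ht
      have hsub : Set.uIcc 0 t ⊆ Metric.ball (0:ℝ) δ :=
        ((convex_ball (0:ℝ) δ).ordConnected).uIcc_subset (Metric.mem_ball_self hδ) ht
      have hball : ∀ u ∈ Set.uIcc 0 t,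
          (‖deriv f u‖ ≤ C * ‖u ^ m‖) ∧ u ∈ D := by
        intro u hu
        have := hδ2 (by simpa [Real.dist_eq] using (Metric.mem_ball.mp (hsub hu)))
        exact this
      have hbound : ∀ u ∈ Set.uIcc 0 t, ‖deriv f u‖ ≤ max C 0 * |t| ^ m := by
        intro u hu
        refine le_trans (hball u hu).1 ?_
        have h1 : ‖u ^ m‖ ≤ |t| ^ m := by
          rw [Real.norm_eq_abs, abs_pow]
          exact pow_le_pow_left₀ (abs_nonneg u) (abs_le_of_mem_uIcc hu) m
        calc C * ‖u ^ m‖ ≤ max C 0 * ‖u ^ m‖ := by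
              exact mul_le_mul_of_nonneg_right (le_max_left C 0) (norm_nonneg _)
          _ ≤ max C 0 * |t| ^ m :=
              mul_le_mul_of_nonneg_left h1 (le_max_right C 0)
      have hmvt := Convex.norm_image_sub_le_of_norm_hasDerivWithin_le
        (f := f) (f' := deriv f) (s := Set.uIcc 0 t)
        (fun u hu => (hdiff u (hball u hu).2).hasDerivWithinAt)
        hbound (convex_uIcc 0 t) Set.left_mem_uIcc Set.right_mem_uIcc
      rw [hf0, sub_zero, sub_zero] at hmvt
      calc ‖f t‖ ≤ max C 0 * |t| ^ m * ‖t‖ := hmvt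
        _ = max C 0 * ‖t ^ (m+1)‖ := by
            rw [Real.norm_eq_abs, Real.norm_eq_abs, abs_pow]
            ring

end aux

/-- approximate linearization: suppose `𝓛⁽ʲ⁾(p) = ∑ₖ (Lʲ p̂)ₖ αₖ`
for `0 ≤ j ≤ m−1`, let `φ = (α₁(v₀),…,α_M(v₀))`, let `B` have orthonormal columns
spanning the Krylov space `K_m = span{φ, Lᵀφ, …, (Lᵀ)^{m−1}φ}`, `A = Bᵀ Lᵀ B`, and
let `y` solve `y′ = A y`, `y(0) = Bᵀ φ`. Then for `0 ≤ j ≤ m−1` the `j`-th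
derivative at `0` of `t ↦ p(x(t))` equals that of `t ↦ p̂ᵀ B y(t)`; consequently
`p(x(t)) − p̂ᵀ B y(t) = O(tᵐ)` as `t → 0`. -/
theorem stmt18
    (N : ℕ) (hN : 1 ≤ N)
    (F : Fin N → MvPolynomial (Fin N) ℝ) (v₀ : Fin N → ℝ)
    (D : Set ℝ) (hD : IsOpen D) (hDc : D.OrdConnected) (h0 : (0 : ℝ) ∈ D)
    (x : ℝ → Fin N → ℝ)
    (hsol : ∀ t ∈ D, HasDerivAt x (fun i => eval (x t) (F i)) t)
    (hx0 : x 0 = v₀)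
    (m : ℕ) (hm : 1 ≤ m)
    (M : ℕ) (α : Fin M → MvPolynomial (Fin N) ℝ)
    (p : MvPolynomial (Fin N) ℝ)
    (phat : Fin M → ℝ) (L : Matrix (Fin M) (Fin M) ℝ)
    (hrep : ∀ j < m, (lieDeriv F)^[j] p = ∑ k, ((L ^ j) *ᵥ phat) k • α k)
    (φ : Fin M → ℝ) (hφ : φ = fun k => eval v₀ (α k))
    (l : ℕ) (B : Matrix (Fin M) (Fin l) ℝ)
    (hortho : Bᵀ * B = 1)
    (hKspan : Submodule.span ℝ (Set.range Bᵀ)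
      = Submodule.span ℝ {w : Fin M → ℝ | ∃ j < m, w = (Lᵀ ^ j) *ᵥ φ})
    (A : Matrix (Fin l) (Fin l) ℝ) (hA : A = Bᵀ * Lᵀ * B)
    (y : ℝ → Fin l → ℝ)
    (hy : ∀ t, HasDerivAt y (A *ᵥ y t) t)
    (hy0 : y 0 = Bᵀ *ᵥ φ) :
    (∀ j < m, iteratedDerivWithin j (fun t => eval (x t) p) D 0
      = iteratedDeriv j (fun t => phat ⬝ᵥ (B *ᵥ y t)) 0) ∧
    (fun t => eval (x t) p - phat ⬝ᵥ (B *ᵥ y t)) =O[𝓝 (0 : ℝ)]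
      fun t => t ^ m := by
  classical
  -- iterated derivatives of the polynomial side
  have hiter : ∀ (j : ℕ), ∀ t ∈ D,
      iteratedDerivWithin j (fun s => eval (x s) p) D t = eval (x t) ((lieDeriv F)^[j] p) := by
    intro j
    induction j with
    | zero => intro t ht; simp
    | succ j ih =>
        intro t ht
        rw [iteratedDerivWithin_succ,
          derivWithin_congr (fun s hs => ih s hs) (ih t ht),
          ((hasDerivAt_eval_comp F (hsol t ht) _).hasDerivWithinAt).derivWithin
            (hD.uniqueDiffWithinAt ht), Function.iterate_succ_apply']
  -- derivatives of the y side
  have hz : ∀ (j : ℕ) (t : ℝ),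
      HasDerivAt (fun s => phat ⬝ᵥ (B *ᵥ ((A ^ j) *ᵥ y s)))
        (phat ⬝ᵥ (B *ᵥ ((A ^ (j+1)) *ᵥ y t))) t := by
    intro j t
    have key : ∀ v : Fin l → ℝ, phat ⬝ᵥ (B *ᵥ ((A ^ j) *ᵥ v))
        = ((B * A ^ j)ᵀ *ᵥ phat) ⬝ᵥ v := by
      intro v
      rw [mulVec_mulVec, dotProduct_mulVec, mulVec_transpose]
    have h1 : HasDerivAt (fun s => ((B * A ^ j)ᵀ *ᵥ phat) ⬝ᵥ y s)
        (((B * A ^ j)ᵀ *ᵥ phat) ⬝ᵥ (A *ᵥ y t)) t := hasDerivAt_dot _ (hy t)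
    have h2 : (fun s => phat ⬝ᵥ (B *ᵥ ((A ^ j) *ᵥ y s)))
        = fun s => ((B * A ^ j)ᵀ *ᵥ phat) ⬝ᵥ y s := funext fun s => key (y s)
    rw [h2]
    convert h1 using 1
    rw [← key (A *ᵥ y t), mulVec_mulVec (y t) (A ^ j) A, ← pow_succ]
  have hgj : ∀ j : ℕ, iteratedDeriv j (fun t => phat ⬝ᵥ (B *ᵥ y t))
      = fun t => phat ⬝ᵥ (B *ᵥ ((A ^ j) *ᵥ y t)) := by
    intro j
    induction j with
    | zero => simp [iteratedDeriv_zero, one_mulVec]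
    | succ j ih =>
        funext t
        rw [iteratedDeriv_succ, ih]
        exact HasDerivAt.deriv (hz j t)
  -- Krylov space facts
  have hproj : ∀ w ∈ Submodule.span ℝ (Set.range Bᵀ), B *ᵥ (Bᵀ *ᵥ w) = w := by
    intro w hw
    induction hw using Submodule.span_induction with
    | mem w hw =>
        obtain ⟨i, rfl⟩ := hw
        have hcol : (Bᵀ : Matrix (Fin l) (Fin M) ℝ) i = B *ᵥ Pi.single i 1 := by
          funext k; simp [mulVec_single, transpose_apply]
        have h2 : Bᵀ *ᵥ (B *ᵥ Pi.single i 1) = Pi.single i 1 := by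
          rw [mulVec_mulVec, hortho, one_mulVec]
        rw [hcol, h2]
    | zero => simp
    | add a b _ _ ha hb => simp [mulVec_add, ha, hb]
    | smul c a _ ha => simp [mulVec_smul, ha]
  have hmem : ∀ j < m, ((Lᵀ) ^ j) *ᵥ φ ∈ Submodule.span ℝ (Set.range Bᵀ) := by
    intro j hj; rw [hKspan]; exact Submodule.subset_span ⟨j, hj, rfl⟩
  have hvec : ∀ j < m, B *ᵥ ((A ^ j) *ᵥ (Bᵀ *ᵥ φ)) = ((Lᵀ) ^ j) *ᵥ φ := by
    intro j
    induction j with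
    | zero =>
        intro _
        have hmem0 : φ ∈ Submodule.span ℝ (Set.range Bᵀ) := by
          have := hmem 0 hm
          simpa [Matrix.one_mulVec] using this
        simpa [Matrix.one_mulVec] using hproj φ hmem0
    | succ j ih =>
        intro hj
        have hj' : j < m := Nat.lt_of_succ_lt hj
        have e0 : (A ^ (j+1)) *ᵥ (Bᵀ *ᵥ φ) = A *ᵥ ((A ^ j) *ᵥ (Bᵀ *ᵥ φ)) := by
          rw [pow_succ', ← mulVec_mulVec]
        have e1 : A *ᵥ ((A ^ j) *ᵥ (Bᵀ *ᵥ φ))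
            = Bᵀ *ᵥ (Lᵀ *ᵥ (B *ᵥ ((A ^ j) *ᵥ (Bᵀ *ᵥ φ)))) := by
          generalize (A ^ j) *ᵥ (Bᵀ *ᵥ φ) = w
          rw [hA, ← mulVec_mulVec, ← mulVec_mulVec]
        rw [e0, e1, ih hj']
        have e2 : Lᵀ *ᵥ ((Lᵀ ^ j) *ᵥ φ) = (Lᵀ ^ (j+1)) *ᵥ φ := by
          rw [mulVec_mulVec, ← pow_succ']
        rw [e2]
        exact hproj _ (hmem _ hj)
  -- the equality of derivatives
  have hmain : ∀ j < m, iteratedDerivWithin j (fun t => eval (x t) p) D 0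
      = iteratedDeriv j (fun t => phat ⬝ᵥ (B *ᵥ y t)) 0 := by
    intro j hj
    rw [hiter j 0 h0,
      show iteratedDeriv j (fun t => phat ⬝ᵥ (B *ᵥ y t)) 0
        = phat ⬝ᵥ (B *ᵥ ((A ^ j) *ᵥ y 0)) from congrFun (hgj j) 0]
    have lhs : eval (x 0) ((lieDeriv F)^[j] p) = ((L ^ j) *ᵥ phat) ⬝ᵥ φ := by
      rw [hrep j hj, hx0]
      simp [hφ, dotProduct, smul_eval]
    have rhs : phat ⬝ᵥ (B *ᵥ ((A ^ j) *ᵥ y 0)) = ((L ^ j) *ᵥ phat) ⬝ᵥ φ := by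
      rw [hy0, hvec j hj, dotProduct_mulVec, ← mulVec_transpose, transpose_pow,
        transpose_transpose]
    rw [rhs, lhs]
  refine ⟨hmain, ?_⟩
  -- smoothness
  have hxC : ∀ n : ℕ, ContDiffOn ℝ n x D := by
    intro n
    induction n with
    | zero =>
        rw [show ((0:ℕ) : WithTop ℕ∞) = 0 from rfl, contDiffOn_zero]
        exact fun t ht => ((hsol t ht).continuousAt).continuousWithinAt
    | succ n ih =>
        rw [show ((n+1:ℕ) : WithTop ℕ∞) = (n : WithTop ℕ∞) + 1 by push_cast; ring,
          contDiffOn_succ_iff_deriv_of_isOpen hD]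
        refine ⟨fun t ht => ((hsol t ht).differentiableAt).differentiableWithinAt,
          by simp, ?_⟩
        have heq : Set.EqOn (deriv x) (fun t => fun i => eval (x t) (F i)) D :=
          fun t ht => (hsol t ht).deriv
        exact ContDiffOn.congr
          (contDiffOn_pi.mpr fun i => (contDiff_eval_mv (F i)).comp_contDiffOn ih) heq
  have hyC : ∀ n : ℕ, ContDiff ℝ n y := by
    intro n
    induction n with
    | zero =>
        rw [show ((0:ℕ) : WithTop ℕ∞) = 0 from rfl, contDiff_zero]
        exact continuous_iff_continuousAt.mpr fun t => (hy t).continuousAt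
    | succ n ih =>
        rw [show ((n+1:ℕ) : WithTop ℕ∞) = (n : WithTop ℕ∞) + 1 by push_cast; ring,
          contDiff_succ_iff_deriv]
        refine ⟨fun t => (hy t).differentiableAt, by simp, ?_⟩
        have heq : deriv y = fun t => A *ᵥ y t := funext fun t => (hy t).deriv
        rw [heq]
        refine contDiff_pi.mpr fun i => ?_
        simp only [Matrix.mulVec, dotProduct]
        exact ContDiff.sum fun j _ => contDiff_const.mul ((contDiff_pi.1 ih) j)
  have hgC : ∀ n : ℕ, ContDiff ℝ n (fun t => phat ⬝ᵥ (B *ᵥ y t)) := by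
    intro n
    simp only [Matrix.mulVec, dotProduct]
    exact ContDiff.sum fun k _ => contDiff_const.mul
      (ContDiff.sum fun j _ => contDiff_const.mul ((contDiff_pi.1 (hyC n)) j))
  have hpx : ∀ n : ℕ, ContDiffOn ℝ n (fun t => eval (x t) p) D :=
    fun n => (contDiff_eval_mv p).comp_contDiffOn (hxC n)
  -- apply the big-O lemma
  refine isBigO_of_iteratedDerivWithin_zero m _ D hD h0
    ((hpx m).sub ((hgC m).contDiffOn)) ?_
  intro j hj
  have hsub : iteratedDerivWithin j
      (fun t => eval (x t) p - phat ⬝ᵥ (B *ᵥ y t)) D 0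
      = iteratedDerivWithin j (fun t => eval (x t) p) D 0
        - iteratedDerivWithin j (fun t => phat ⬝ᵥ (B *ᵥ y t)) D 0 := by
    have h2 : (fun t => eval (x t) p - phat ⬝ᵥ (B *ᵥ y t))
        = (fun t => eval (x t) p) - (fun t => phat ⬝ᵥ (B *ᵥ y t)) := rfl
    rw [h2]
    exact iteratedDerivWithin_sub h0 hD.uniqueDiffOn (hpx j 0 h0) ((hgC j).contDiffOn 0 h0)
  rw [hsub, hmain j hj, iDW_of_isOpen hD h0 j, sub_self]
end
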